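/- Let M ⊂ ℝ^m be nonempty compact, P a probability measure on ℝ^m with s(P) := E[dist(X,M)²] < ∞, (y_i) i.i.d. from P, and (Z_k) nonempty finite subsets of M with d_H(Z_k, M) → 0. Then almost surely, for every ε > 0 there exist N, K such that for all n ≥ N and k ≥ K, |(1/n) Σ_{i=1}^n min_{z∈Z_k} ‖y_i − z‖² − s(P)| < ε (i.e., GD²(Y_n, Z_k) → s(P) in the joint limit almost surely). -/

import Mathlib

open MeasureTheory Filter

/-- Joint-limit convergence of the squared generational distance: with `M` nonempty compact,
`P` a probability measure with `s(P) := E[dist(X,M)²] < ∞`, `(y i)` i.i.d. from `P`, and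
`(Z k)` nonempty finite subsets of `M` with `d_H(Z k, M) → 0`, almost surely
`GD²(Y_n, Z_k) = (1/n) ∑_{i<n} dist(y i, Z k)² → s(P)` in the joint limit `n, k → ∞`. -/
theorem stmt7 {m : ℕ} (M : Set (EuclideanSpace ℝ (Fin m))) (hM : IsCompact M)
    (hMne : M.Nonempty)
    {Ω : Type*} [MeasurableSpace Ω] (μ : Measure Ω) [IsProbabilityMeasure μ]
    (P : Measure (EuclideanSpace ℝ (Fin m))) [IsProbabilityMeasure P]
    (y : ℕ → Ω → EuclideanSpace ℝ (Fin m))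
    (hmeas : ∀ i, Measurable (y i))
    (hindep : ProbabilityTheory.iIndepFun y μ)
    (hlaw : ∀ i, Measure.map (y i) μ = P)
    (hint : Integrable (fun x => Metric.infDist x M ^ 2) P)
    (Z : ℕ → Set (EuclideanSpace ℝ (Fin m)))
    (hZsub : ∀ k, Z k ⊆ M) (hZfin : ∀ k, (Z k).Finite) (hZne : ∀ k, (Z k).Nonempty)
    (hconv : Tendsto (fun k => Metric.hausdorffDist (Z k) M) atTop (nhds 0)) :
    ∀ᵐ ω ∂μ, ∀ ε > 0, ∃ N K : ℕ, ∀ n ≥ N, ∀ k ≥ K,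
      |(1 / (n : ℝ)) * ∑ i ∈ Finset.range n, Metric.infDist (y i ω) (Z k) ^ 2
        - ∫ x, Metric.infDist x M ^ 2 ∂P| < ε := by
  classical
  set f : EuclideanSpace ℝ (Fin m) → ℝ := fun x => Metric.infDist x M with hf
  set g : EuclideanSpace ℝ (Fin m) → ℝ := fun x => Metric.infDist x M ^ 2 with hg
  have hfc : Continuous f := Metric.continuous_infDist_pt M
  have hgc : Continuous g := by exact (hfc.pow 2)
  have hfm : Measurable f := hfc.measurable
  have hgm : Measurable g := hgc.measurable
  -- integrability of f under P
  have hfint : Integrable f P := by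
    have h1 : Integrable (fun x => 1 + g x) P := (integrable_const 1).add hint
    refine h1.mono' hfc.aestronglyMeasurable (Filter.Eventually.of_forall fun x => ?_)
    have h0 : 0 ≤ f x := Metric.infDist_nonneg
    rw [Real.norm_of_nonneg h0]
    have hgx : g x = f x ^ 2 := rfl
    rcases le_total (f x) 1 with h | h
    · nlinarith [sq_nonneg (f x)]
    · nlinarith [sq_nonneg (f x - 1)]
  -- SLLN for g ∘ y and f ∘ y
  have hident : ∀ (φ : EuclideanSpace ℝ (Fin m) → ℝ), Measurable φ → ∀ i,
      ProbabilityTheory.IdentDistrib (fun ω => φ (y i ω)) (fun ω => φ (y 0 ω)) μ μ := by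
    intro φ hφ i
    have : ProbabilityTheory.IdentDistrib (y i) (y 0) μ μ :=
      ⟨(hmeas i).aemeasurable, (hmeas 0).aemeasurable, by rw [hlaw i, hlaw 0]⟩
    exact this.comp hφ
  have hindep' : ∀ (φ : EuclideanSpace ℝ (Fin m) → ℝ), Measurable φ →
      Pairwise (Function.onFun (ProbabilityTheory.IndepFun · · μ) (fun i ω => φ (y i ω))) := by
    intro φ hφ i j hij
    exact (hindep.indepFun hij).comp hφ hφ
  have hintμ : ∀ (φ : EuclideanSpace ℝ (Fin m) → ℝ), Measurable φ → Integrable φ P →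
      Integrable (fun ω => φ (y 0 ω)) μ := by
    intro φ hφ hI
    rw [← hlaw 0] at hI
    exact (integrable_map_measure hφ.aestronglyMeasurable (hmeas 0).aemeasurable).mp hI
  have hE : ∀ (φ : EuclideanSpace ℝ (Fin m) → ℝ), Measurable φ →
      ∫ ω, φ (y 0 ω) ∂μ = ∫ x, φ x ∂P := by
    intro φ hφ
    rw [← hlaw 0, integral_map (hmeas 0).aemeasurable hφ.aestronglyMeasurable]
  have hsllnG := ProbabilityTheory.strong_law_ae_real (fun i ω => g (y i ω))
    (hintμ g hgm hint) (hindep' g hgm) (hident g hgm)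
  have hsllnF := ProbabilityTheory.strong_law_ae_real (fun i ω => f (y i ω))
    (hintμ f hfm hfint) (hindep' f hfm) (hident f hfm)
  -- hausdorff dist facts
  have hEdist : ∀ k, EMetric.hausdorffEdist (Z k) M ≠ ⊤ := fun k =>
    Metric.hausdorffEdist_ne_top_of_nonempty_of_bounded (hZne k) hMne
      (hZfin k).isBounded hM.isBounded
  filter_upwards [hsllnG, hsllnF] with ω hωG hωF
  rw [hE g hgm] at hωG
  intro ε hε
  -- bound on the averages of f
  obtain ⟨C, hC⟩ : ∃ C : ℝ, ∀ n : ℕ, (∑ i ∈ Finset.range n, f (y i ω)) / n ≤ C := by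
    obtain ⟨C, hC⟩ := hωF.bddAbove_range.exists_ge 0
    exact ⟨C, fun n => hC.2 _ ⟨n, rfl⟩⟩
  have hC0 : 0 ≤ C := le_trans (by simp) (hC 0)
  -- choose N
  obtain ⟨N₁, hN₁⟩ := (Metric.tendsto_atTop.mp hωG) (ε / 2) (by linarith)
  -- choose K : eventually h k ≤ 1 and h k * (2C+1) < ε/2
  have hev : ∀ᶠ k in atTop, Metric.hausdorffDist (Z k) M < min 1 (ε / 2 / (2 * C + 1)) := by
    refine hconv.eventually_lt_const ?_
    have : 0 < ε / 2 / (2 * C + 1) := by positivity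
    exact lt_min one_pos this
  obtain ⟨K, hK⟩ := hev.exists_forall_of_atTop
  refine ⟨max N₁ 1, K, fun n hn k hk => ?_⟩
  have hn1 : 1 ≤ n := le_trans (le_max_right _ _) hn
  have hnpos : (0:ℝ) < n := by exact_mod_cast hn1
  set h := Metric.hausdorffDist (Z k) M with hh
  have hh0 : 0 ≤ h := Metric.hausdorffDist_nonneg
  have hk1 : h < 1 := lt_of_lt_of_le (hK k hk) (min_le_left _ _)
  have hk2 : h < ε / 2 / (2 * C + 1) := lt_of_lt_of_le (hK k hk) (min_le_right _ _)
  -- pointwise bounds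
  have hpt : ∀ x, g x ≤ Metric.infDist x (Z k) ^ 2 ∧
      Metric.infDist x (Z k) ^ 2 ≤ g x + h * (2 * f x + h) := by
    intro x
    have h1 : f x ≤ Metric.infDist x (Z k) :=
      Metric.infDist_le_infDist_of_subset (hZsub k) (hZne k)
    have h2 : Metric.infDist x (Z k) ≤ f x + h := by
      have := Metric.infDist_le_infDist_add_hausdorffDist
        (x := x) (s := M) (t := Z k) (by rw [EMetric.hausdorffEdist_comm]; exact hEdist k)
      rwa [Metric.hausdorffDist_comm] at this
    have h0 : 0 ≤ f x := Metric.infDist_nonneg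
    have hgx : g x = f x ^ 2 := rfl
    constructor
    · rw [hgx]; exact pow_le_pow_left₀ h0 h1 2
    · nlinarith [Metric.infDist_nonneg (x := x) (s := Z k)]
  -- average bound
  have hsum_lb : ∑ i ∈ Finset.range n, g (y i ω) ≤
      ∑ i ∈ Finset.range n, Metric.infDist (y i ω) (Z k) ^ 2 :=
    Finset.sum_le_sum fun i _ => (hpt (y i ω)).1
  have hsum_ub : ∑ i ∈ Finset.range n, Metric.infDist (y i ω) (Z k) ^ 2 ≤
      ∑ i ∈ Finset.range n, (g (y i ω) + h * (2 * f (y i ω) + h)) :=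
    Finset.sum_le_sum fun i _ => (hpt (y i ω)).2
  have havgF := hC n
  have hNn := hN₁ n (le_trans (le_max_left _ _) hn)
  rw [Real.dist_eq] at hNn
  set S := ∫ x, g x ∂P with hS
  set A := (∑ i ∈ Finset.range n, g (y i ω)) / n with hA
  set B := (∑ i ∈ Finset.range n, Metric.infDist (y i ω) (Z k) ^ 2) / n with hB
  have hsumf : ∑ i ∈ Finset.range n, f (y i ω) ≤ C * n := by
    rw [div_le_iff₀ hnpos] at havgF; linarith
  have h3 : ∑ i ∈ Finset.range n,
      (Metric.infDist (y i ω) (Z k) ^ 2 - g (y i ω)) ≤ (h * (2 * C + h)) * n := by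
    have e1 : ∀ i ∈ Finset.range n,
        Metric.infDist (y i ω) (Z k) ^ 2 - g (y i ω) ≤ 2 * h * f (y i ω) + h * h := by
      intro i _
      have := (hpt (y i ω)).2
      linarith
    calc ∑ i ∈ Finset.range n, (Metric.infDist (y i ω) (Z k) ^ 2 - g (y i ω))
        ≤ ∑ i ∈ Finset.range n, (2 * h * f (y i ω) + h * h) := Finset.sum_le_sum e1
      _ = 2 * h * (∑ i ∈ Finset.range n, f (y i ω)) + n * (h * h) := by
          rw [Finset.sum_add_distrib, ← Finset.mul_sum, Finset.sum_const,
            Finset.card_range, nsmul_eq_mul]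
      _ ≤ 2 * h * (C * n) + n * (h * h) := by nlinarith
      _ = (h * (2 * C + h)) * n := by ring
  have hdiff : B - A ≤ h * (2 * C + h) := by
    have e2 : B - A = (∑ i ∈ Finset.range n,
        (Metric.infDist (y i ω) (Z k) ^ 2 - g (y i ω))) / n := by
      rw [hB, hA, div_sub_div_same, Finset.sum_sub_distrib]
    rw [e2, div_le_iff₀ hnpos]
    exact h3
  have hABle : A ≤ B := by
    rw [hA, hB]
    gcongr
  have hsmall : h * (2 * C + h) < ε / 2 := by
    have h2C1 : (0:ℝ) < 2 * C + 1 := by linarith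
    calc h * (2 * C + h) ≤ h * (2 * C + 1) := by nlinarith
      _ < ε / 2 / (2 * C + 1) * (2 * C + 1) := by
          rcases eq_or_lt_of_le hh0 with h0 | h0
          · rw [← h0]; simpa using by positivity
          · exact mul_lt_mul_of_pos_right hk2 h2C1
      _ = ε / 2 := by field_simp
  have key : |B - S| < ε := by
    have : |B - A| < ε / 2 := by
      rw [abs_of_nonneg (by linarith)]
      exact lt_of_le_of_lt hdiff hsmall
    calc |B - S| ≤ |B - A| + |A - S| := abs_sub_le _ _ _
      _ < ε / 2 + ε / 2 := add_lt_add this hNn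
      _ = ε := by ring
  have : (1 / (n:ℝ)) * ∑ i ∈ Finset.range n, Metric.infDist (y i ω) (Z k) ^ 2 = B := by
    rw [hB]; ring
  rw [this]
  exact key
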